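/- arXiv:1611.05979 — 3 statements merged into one kernel-verified Lean document; each statement's English description precedes it below -/
import Mathlib

section
/- For any full-rank lattice L in R^n, there is a map psi_L : R^n -> V(L) with ||psi_L(x)|| <= ||x|| for all x, such that for every fundamental body K of L, psi_L restricted to the interior of K is injective and volume-preserving. -/
open scoped Real Pointwise
open MeasureTheory Set

noncomputable section

variable {E : Type*} [NormedAddCommGroup E] [InnerProductSpace ℝ E]

/-- `A` is (the point set of) a lattice of some rank `d` with determinant `v`,
computed as `sqrt (det (Bᵀ B))` for a `ℤ`-basis `b` that is `ℝ`-linearly independent. -/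
def latHasDet (A : Set E) (v : ℝ) : Prop :=
  ∃ (d : ℕ) (b : Fin d → E), LinearIndependent ℝ b ∧
    A = (Submodule.span ℤ (Set.range b) : Set E) ∧
    v = Real.sqrt (Matrix.det (Matrix.of fun i j : Fin d => (inner ℝ (b i) (b j) : ℝ)))

/-- `L` is a lattice of rank `d` : it is generated over `ℤ` by `d` 
`ℝ`-linearly independent vectors. -/
def IsLatticeOfRank (L : Submodule ℤ E) (d : ℕ) : Prop :=
  ∃ b : Fin d → E, LinearIndependent ℝ b ∧ L = Submodule.span ℤ (Set.range b)

/-- Gaussian mass of a set `A` with parameter `s`. -/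
def rhoS (s : ℝ) (A : Set E) : ℝ := ∑' x : A, Real.exp (-π * ‖(x : E)‖ ^ 2 / s ^ 2)

/-- A lattice (given by its point set) is stable if it has determinant one and every
sublattice has determinant at least one. -/
def IsStable (A : Set E) : Prop :=
  latHasDet A 1 ∧
    ∀ M : Submodule ℤ E, (M : Set E) ⊆ A → ∀ v, latHasDet (M : Set E) v → 1 ≤ v

/-- The Voronoi cell of a lattice. -/
def voronoi (L : Submodule ℤ E) : Set E := {x | ∀ y ∈ L, ‖x‖ ≤ ‖y - x‖}

/-- The covering radius of a lattice: the furthest distance from a point of the span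
of the lattice to the lattice. -/
def covRad (L : Submodule ℤ E) : ℝ :=
  ⨆ t : Submodule.span ℝ (L : Set E), ⨅ y : L, ‖(t : E) - (y : E)‖

/-- The dual lattice, as a set. -/
def dualSet (L : Submodule ℤ E) : Set E :=
  {w | ∀ y ∈ L, ∃ k : ℤ, (inner ℝ w y : ℝ) = (k : ℝ)}

/-- The Gaussian measure of `S/s`. -/
def gauss {n : ℕ} (s : ℝ) (S : Set (EuclideanSpace ℝ (Fin n))) : ℝ :=
  ∫ x in s⁻¹ • S, Real.exp (-π * ‖x‖ ^ 2)

/-- A fundamental body for a lattice with point set `L`: a convex body `K` such that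
`K + L` tiles space, i.e. `vol K = det L` and the interior of `K` is disjoint from every
nontrivial lattice translate of `K`. -/
def IsFundBody {n : ℕ} (L : Set (EuclideanSpace ℝ (Fin n)))
    (K : Set (EuclideanSpace ℝ (Fin n))) : Prop :=
  Convex ℝ K ∧ IsCompact K ∧ (interior K).Nonempty ∧
    (∀ y ∈ L, y ≠ 0 → interior K ∩ ((fun x => x + y) '' K) = ∅) ∧
    ∀ v, latHasDet L v → volume K = ENNReal.ofReal v

/-- Concatenation of Euclidean vectors. -/
def appendE {n m : ℕ} (x : EuclideanSpace ℝ (Fin n)) (y : EuclideanSpace ℝ (Fin m)) :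
    EuclideanSpace ℝ (Fin (n + m)) :=
  WithLp.toLp 2 fun i => Fin.addCases (motive := fun _ => ℝ) (fun j => x j) (fun j => y j) i

/-- There is a norm-nonincreasing map into the Voronoi cell which is
injective and volume-preserving on the interior of any fundamental body. -/
theorem exists_voronoi_reduction_map {n : ℕ}
    (L : Submodule ℤ (EuclideanSpace ℝ (Fin n))) (hL : IsLatticeOfRank L n) :
    ∃ ψ : EuclideanSpace ℝ (Fin n) → EuclideanSpace ℝ (Fin n),
      (∀ x, ψ x ∈ voronoi L) ∧ (∀ x, ‖ψ x‖ ≤ ‖x‖) ∧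
      ∀ K : Set (EuclideanSpace ℝ (Fin n)),
        IsFundBody (L : Set (EuclideanSpace ℝ (Fin n))) K →
          Set.InjOn ψ (interior K) ∧
          ∀ A ⊆ interior K, MeasurableSet A → volume (ψ '' A) = volume A := by
  classical
  obtain ⟨b, hb, hLb⟩ := hL
  -- closedness and countability of the lattice
  have hcard : Fintype.card (Fin n) = Module.finrank ℝ (EuclideanSpace ℝ (Fin n)) := by simp
  let B : Module.Basis (Fin n) ℝ (EuclideanSpace ℝ (Fin n)) := Module.Basis.mk hb (hb.span_eq_top_of_card_eq_finrank' hcard).ge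
  have hB : ⇑B = b := Module.Basis.coe_mk _ _
  have hdisc : DiscreteTopology (Submodule.span ℤ (Set.range b)) := by
    rw [← hB]; infer_instance
  have hclosed : IsClosed (L : Set (EuclideanSpace ℝ (Fin n))) := by
    rw [hLb]
    have : DiscreteTopology (Submodule.span ℤ (Set.range b)).toAddSubgroup := hdisc
    exact AddSubgroup.isClosed_of_discrete
      (H := (Submodule.span ℤ (Set.range b)).toAddSubgroup)
  have hcount : (L : Set (EuclideanSpace ℝ (Fin n))).Countable := by
    rw [hLb]
    have : (Submodule.span ℤ (Set.range b) : Set (EuclideanSpace ℝ (Fin n)))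
        = Set.range (fun k : Fin n → ℤ => ∑ i, k i • b i) := by
      ext x
      simp only [SetLike.mem_coe, Set.mem_range]
      rw [Submodule.mem_span_range_iff_exists_fun]
    rw [this]
    exact Set.countable_range _
  have h0 : (0 : EuclideanSpace ℝ (Fin n)) ∈ L := L.zero_mem
  obtain ⟨e, he⟩ := hcount.exists_eq_range ⟨0, h0⟩
  have heL : ∀ k, e k ∈ L := fun k => by
    have : e k ∈ Set.range e := Set.mem_range_self k
    rwa [← he] at this
  -- existence of a closest lattice vector in the enumeration
  have hex : ∀ x : EuclideanSpace ℝ (Fin n), ∃ k : ℕ, ∀ z ∈ L, dist x (e k) ≤ dist x z := by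
    intro x
    obtain ⟨c, hcL, hcd⟩ := hclosed.exists_infDist_eq_dist ⟨0, h0⟩ x
    rw [he] at hcL
    obtain ⟨k, rfl⟩ := hcL
    exact ⟨k, fun z hz => hcd ▸ Metric.infDist_le_dist_of_mem hz⟩
  set c : EuclideanSpace ℝ (Fin n) → EuclideanSpace ℝ (Fin n) := fun x => e (Nat.find (hex x)) with hc
  have hcL : ∀ x, c x ∈ L := fun x => heL _
  have hcmin : ∀ x, ∀ z ∈ L, dist x (c x) ≤ dist x z := fun x => Nat.find_spec (hex x)
  set ψ : EuclideanSpace ℝ (Fin n) → EuclideanSpace ℝ (Fin n) := fun x => x - c x with hψ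
  refine ⟨ψ, ?_, ?_, ?_⟩
  · -- in the Voronoi cell
    intro x
    simp only [voronoi, Set.mem_setOf_eq]
    intro y hy
    have h1 : ‖x - c x‖ = dist x (c x) := (dist_eq_norm x (c x)).symm
    have h2 : dist x (c x) ≤ dist x (c x + y) := hcmin x _ (L.add_mem (hcL x) hy)
    calc ‖ψ x‖ = dist x (c x) := h1
      _ ≤ dist x (c x + y) := h2
      _ = ‖y - ψ x‖ := by
          rw [dist_eq_norm, ← norm_neg (x - (c x + y))]
          congr 1
          simp only [hψ]
          abel
  · -- norm nonincreasing
    intro x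
    have := hcmin x 0 h0
    simpa [ψ, dist_eq_norm] using this
  · intro K hK
    obtain ⟨-, -, -, hKdis, -⟩ := hK
    have hinj : Set.InjOn ψ (interior K) := by
      intro a ha b hb' hab
      by_contra hne
      have hyL : c a - c b ∈ L := L.sub_mem (hcL a) (hcL b)
      have hab' : a - c a = b - c b := hab
      have hy0 : c a - c b ≠ 0 := by
        intro h
        apply hne
        have hcc := sub_eq_zero.mp h
        calc a = (a - c a) + c a := by abel
          _ = (b - c b) + c b := by rw [hab', hcc]
          _ = b := by abel
      have hmem : a ∈ interior K ∩ ((fun x => x + (c a - c b)) '' K) := by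
        refine ⟨ha, b, interior_subset hb', ?_⟩
        calc b + (c a - c b) = (b - c b) + c a := by abel
          _ = (a - c a) + c a := by rw [hab']
          _ = a := by abel
      rw [hKdis _ hyL hy0] at hmem
      exact hmem
    refine ⟨hinj, ?_⟩
    intro A hA hAm
    -- measurable partition according to the chosen closest vector
    set T : EuclideanSpace ℝ (Fin n) → Set (EuclideanSpace ℝ (Fin n)) := fun y => {x | ∀ z ∈ L, dist x y ≤ dist x z} with hT
    have hTclosed : ∀ y, IsClosed (T y) := by
      intro y
      have : T y = ⋂ z : (L : Set (EuclideanSpace ℝ (Fin n))), {x : EuclideanSpace ℝ (Fin n) | dist x y ≤ dist x (z : EuclideanSpace ℝ (Fin n))} := by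
        ext x
        simp only [hT, Set.mem_setOf_eq, Set.mem_iInter, Subtype.forall, SetLike.mem_coe]
      rw [this]
      exact isClosed_iInter fun z =>
        isClosed_le (continuous_id.dist continuous_const) (continuous_id.dist continuous_const)
    set S : ℕ → Set (EuclideanSpace ℝ (Fin n)) := fun k => {x | Nat.find (hex x) = k} with hS
    have hSmem : ∀ (x : EuclideanSpace ℝ (Fin n)) k, x ∈ S k ↔ x ∈ T (e k) ∧ ∀ j < k, x ∉ T (e j) := by
      intro x k
      simp only [hS, Set.mem_setOf_eq, Nat.find_eq_iff (hex x), hT]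
    have hSmeas : ∀ k, MeasurableSet (S k) := by
      intro k
      have : S k = T (e k) ∩ ⋂ j, ⋂ (_ : j < k), (T (e j))ᶜ := by
        ext x
        simp only [Set.mem_inter_iff, Set.mem_iInter, Set.mem_compl_iff, hSmem x k]
      rw [this]
      exact ((hTclosed (e k)).measurableSet).inter
        (MeasurableSet.iInter fun j => MeasurableSet.iInter fun _ =>
          (hTclosed (e j)).measurableSet.compl)
    have hSdisj : Pairwise (Function.onFun Disjoint S) := by
      intro i j hij
      rw [Function.onFun, Set.disjoint_left]
      intro x hxi hxj
      exact hij (hxi.symm.trans hxj)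
    have hScover : ∀ x : EuclideanSpace ℝ (Fin n), x ∈ S (Nat.find (hex x)) := fun x => rfl
    have hψS : ∀ k, ∀ x ∈ S k, ψ x = x - e k := by
      intro k x hx
      simp only [hS, Set.mem_setOf_eq] at hx
      simp [ψ, hc, hx]
    -- decompose the image
    have hAim : ψ '' A = ⋃ k, (fun x => x + -e k) '' (A ∩ S k) := by
      ext y
      simp only [Set.mem_image, Set.mem_iUnion, Set.mem_inter_iff]
      constructor
      · rintro ⟨x, hxA, rfl⟩
        exact ⟨Nat.find (hex x), x, ⟨hxA, hScover x⟩, by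
          rw [← sub_eq_add_neg, ← hψS _ x (hScover x)]⟩
      · rintro ⟨k, x, ⟨hxA, hxS⟩, rfl⟩
        exact ⟨x, hxA, by rw [hψS k x hxS, sub_eq_add_neg]⟩
    have hpm : ∀ k, MeasurableSet ((fun x => x + -e k) '' (A ∩ S k)) := by
      intro k
      rw [Set.image_add_right]
      exact (measurable_add_const _) ((hAm.inter (hSmeas k)))
    have hpv : ∀ k, volume ((fun x => x + -e k) '' (A ∩ S k)) = volume (A ∩ S k) := by
      intro k
      rw [Set.image_add_right]
      exact measure_preimage_add_right volume _ _
    have hpd : Pairwise (Function.onFun Disjoint fun k => (fun x => x + -e k) '' (A ∩ S k)) := by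
      intro i j hij
      rw [Function.onFun, Set.disjoint_left]
      rintro y ⟨a, ⟨haA, hai⟩, rfl⟩ ⟨b', ⟨hbA, hbj⟩, hba⟩
      have hψab : ψ a = ψ b' := by
        rw [hψS i a hai, hψS j b' hbj, sub_eq_add_neg, sub_eq_add_neg]
        exact hba.symm
      have heq : a = b' := hinj (hA haA) (hA hbA) hψab
      subst heq
      have h1 : Nat.find (hex a) = i := hai
      have h2 : Nat.find (hex a) = j := hbj
      exact hij (h1.symm.trans h2)
    have hAcover : A = ⋃ k, A ∩ S k := by
      ext x
      simp only [Set.mem_iUnion, Set.mem_inter_iff]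
      exact ⟨fun hx => ⟨Nat.find (hex x), hx, hScover x⟩, fun ⟨k, hx, _⟩ => hx⟩
    calc volume (ψ '' A) = volume (⋃ k, (fun x => x + -e k) '' (A ∩ S k)) := by rw [hAim]
      _ = ∑' k, volume ((fun x => x + -e k) '' (A ∩ S k)) := measure_iUnion hpd hpm
      _ = ∑' k, volume (A ∩ S k) := by simp only [hpv]
      _ = volume (⋃ k, A ∩ S k) :=
          (measure_iUnion (fun i j hij => (hSdisj hij).mono inter_subset_right inter_subset_right)
            (fun k => hAm.inter (hSmeas k))).symm
      _ = volume A := by rw [← hAcover]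
end
end

section
/- For any non-decreasing measurable function f : R -> R, any full-rank lattice L in R^n, and any fundamental body K of L, the integral of f(||x||) over the Voronoi cell V(L) is at most the integral of f(||x||) over K. -/
open scoped Real Pointwise
open MeasureTheory Set

set_option maxHeartbeats 1000000

noncomputable section

variable {E : Type*} [NormedAddCommGroup E] [InnerProductSpace ℝ E]

/-- The Voronoi cell minimizes integrals of nondecreasing functions of
the norm among fundamental bodies. -/
theorem integral_voronoi_le_integral_fundBody {n : ℕ}
    (L : Submodule ℤ (EuclideanSpace ℝ (Fin n))) (hL : IsLatticeOfRank L n)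
    (K : Set (EuclideanSpace ℝ (Fin n)))
    (hK : IsFundBody (L : Set (EuclideanSpace ℝ (Fin n))) K)
    (f : ℝ → ℝ) (hf : Monotone f) (hfm : Measurable f) :
    (∫ x in voronoi L, f ‖x‖) ≤ ∫ x in K, f ‖x‖ := by
  classical
  obtain ⟨b, hbind, rfl⟩ := hL
  obtain ⟨hK1, hK2, -, hK4, hKdet⟩ := hK
  have hcard : Fintype.card (Fin n) = Module.finrank ℝ (EuclideanSpace ℝ (Fin n)) := by
    simp [finrank_euclideanSpace_fin]
  let B : Module.Basis (Fin n) ℝ (EuclideanSpace ℝ (Fin n)) :=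
    Module.Basis.mk hbind (hbind.span_eq_top_of_card_eq_finrank' hcard).ge
  have hB : ⇑B = b := Module.Basis.coe_mk _ _
  rw [← hB] at hK4 ⊢
  have hKvol : volume K = ENNReal.ofReal (Real.sqrt
      (Matrix.det (Matrix.of fun i j : Fin n => (inner ℝ (B i) (B j) : ℝ)))) :=
    hKdet _ ⟨n, ⇑B, B.linearIndependent, by rw [hB], rfl⟩
  set L : Submodule ℤ (EuclideanSpace ℝ (Fin n)) := Submodule.span ℤ (Set.range ⇑B) with hLdef
  set V : Set (EuclideanSpace ℝ (Fin n)) := voronoi L with hVdef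
  haveI : MeasurableVAdd (↥L) (EuclideanSpace ℝ (Fin n)) :=
    (inferInstance : MeasurableVAdd (↥((Submodule.span ℤ (Set.range ⇑B)).toAddSubgroup)) (EuclideanSpace ℝ (Fin n)))
  haveI : VAddInvariantMeasure (↥L) (EuclideanSpace ℝ (Fin n)) volume :=
    (inferInstance : VAddInvariantMeasure (↥((Submodule.span ℤ (Set.range ⇑B)).toAddSubgroup)) (EuclideanSpace ℝ (Fin n)) volume)
  haveI : Countable (↥L) :=
    (inferInstance : Countable (↥(Submodule.span ℤ (Set.range ⇑B))))
  -- basic facts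
  have hVnorm : ∀ x ∈ V, ∀ y ∈ L, ‖x‖ ≤ ‖x - y‖ := by
    intro x hx y hy
    simpa [norm_sub_rev] using hx y hy
  have hVclosed : IsClosed V := by
    have : V = ⋂ y ∈ (L : Set (EuclideanSpace ℝ (Fin n))), {x : EuclideanSpace ℝ (Fin n) | ‖x‖ ≤ ‖y - x‖} := by
      ext x; simp [hVdef, voronoi]
    rw [this]
    exact isClosed_biInter fun y _ =>
      isClosed_le continuous_norm ((continuous_const.sub continuous_id).norm)
  have hVmeas : MeasurableSet V := hVclosed.measurableSet
  have hLclosed : IsClosed (L : Set (EuclideanSpace ℝ (Fin n))) := by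
    have := AddSubgroup.isClosed_of_discrete (H := L.toAddSubgroup)
    simpa using this
  -- V is bounded
  obtain ⟨RV, hRV⟩ : ∃ R : ℝ, V ⊆ Metric.closedBall 0 R := by
    obtain ⟨R, hR⟩ := (ZSpan.fundamentalDomain_isBounded B).subset_closedBall 0
    refine ⟨R, fun x hx => ?_⟩
    have h1 : (ZSpan.floor B x : EuclideanSpace ℝ (Fin n)) ∈ L := SetLike.coe_mem _
    have h2 : ‖x - (ZSpan.floor B x : EuclideanSpace ℝ (Fin n))‖ ≤ R := by
      have := hR (ZSpan.fract_mem_fundamentalDomain B x)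
      simpa [ZSpan.fract_apply, Metric.mem_closedBall, dist_zero_right] using this
    exact Metric.mem_closedBall.mpr (by
      simpa [dist_zero_right] using (hVnorm x hx _ h1).trans h2)
  -- covering
  have hcov : ∀ x : EuclideanSpace ℝ (Fin n), ∃ g : L, g +ᵥ x ∈ V := by
    intro x
    obtain ⟨z, hzL, hz⟩ := hLclosed.exists_infDist_eq_dist ⟨0, L.zero_mem⟩ x
    refine ⟨⟨-z, neg_mem hzL⟩, ?_⟩
    show ∀ u ∈ L, ‖(-z) + x‖ ≤ ‖u - ((-z) + x)‖
    intro u hu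
    have h1 : Metric.infDist x (L : Set (EuclideanSpace ℝ (Fin n))) ≤ dist x (z + u) :=
      Metric.infDist_le_dist_of_mem (L.add_mem hzL hu)
    calc ‖(-z) + x‖ = dist x z := by rw [dist_eq_norm]; congr 1; abel
      _ ≤ dist x (z + u) := by rw [← hz]; exact h1
      _ = ‖u - ((-z) + x)‖ := by rw [dist_eq_norm, ← norm_neg (x - (z + u))]; congr 1; abel
  -- a.e. disjointness of Voronoi translates
  have hVdisj : Pairwise (Function.onFun (AEDisjoint volume) fun g : L => g +ᵥ V) := by
    intro g g' hgg'
    set y := (g : EuclideanSpace ℝ (Fin n)) with hy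
    set y' := (g' : EuclideanSpace ℝ (Fin n)) with hy'
    have hw : y' - y ≠ 0 := sub_ne_zero.mpr fun h => hgg' (Subtype.coe_injective h).symm
    set w := y' - y with hwdef
    set x₀ := (2:ℝ)⁻¹ • (y + y') with hx₀
    set W : Submodule ℝ (EuclideanSpace ℝ (Fin n)) := LinearMap.ker ((innerSL ℝ w : EuclideanSpace ℝ (Fin n) →ₗ[ℝ] ℝ)) with hW
    have hWmem : ∀ z, z ∈ W ↔ (inner ℝ w z : ℝ) = 0 := by
      intro z; rw [hW, LinearMap.mem_ker]; exact Iff.rfl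
    have hWne : AffineSubspace.mk' x₀ W ≠ ⊤ := by
      intro htop
      have hmem : (x₀ + w) ∈ AffineSubspace.mk' x₀ W := htop ▸ AffineSubspace.mem_top ℝ _ _
      have hm := AffineSubspace.mem_mk'.mp hmem
      rw [vsub_eq_sub, add_sub_cancel_left, hWmem] at hm
      exact hw (inner_self_eq_zero.mp hm)
    refine measure_mono_null ?_ (Measure.addHaar_affineSubspace volume _ hWne)
    rintro x ⟨hx1, hx2⟩
    rw [Set.mem_vadd_set_iff_neg_vadd_mem] at hx1 hx2
    have hx1' : x - y ∈ V := by
      have h0 : (-y + x) ∈ V := hx1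
      rwa [neg_add_eq_sub] at h0
    have hx2' : x - y' ∈ V := by
      have h0 : (-y' + x) ∈ V := hx2
      rwa [neg_add_eq_sub] at h0
    have e1 : ‖x - y‖ ≤ ‖x - y'‖ := by
      have h0 := hVnorm _ hx1' (y' - y) (sub_mem g'.2 g.2)
      calc ‖x - y‖ ≤ ‖x - y - (y' - y)‖ := h0
        _ = ‖x - y'‖ := by congr 1; abel
    have e2 : ‖x - y'‖ ≤ ‖x - y‖ := by
      have h0 := hVnorm _ hx2' (y - y') (sub_mem g.2 g'.2)
      calc ‖x - y'‖ ≤ ‖x - y' - (y - y')‖ := h0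
        _ = ‖x - y‖ := by congr 1; abel
    have he : ‖x - y‖ = ‖x - y'‖ := le_antisymm e1 e2
    refine AffineSubspace.mem_mk'.mpr ?_
    rw [vsub_eq_sub, hWmem]
    have h2 : ‖x - y‖ ^ 2 = ‖x - y'‖ ^ 2 := by rw [he]
    rw [norm_sub_sq_real, norm_sub_sq_real] at h2
    rw [hwdef, hx₀]
    simp only [inner_sub_left, inner_sub_right, inner_add_right, inner_add_left,
      real_inner_smul_left, real_inner_smul_right, real_inner_self_eq_norm_sq]
    nlinarith [h2, real_inner_self_eq_norm_sq y, real_inner_self_eq_norm_sq y',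
      real_inner_comm x y, real_inner_comm x y', real_inner_comm y y']
  have hVfd : IsAddFundamentalDomain L V volume :=
    ⟨hVmeas.nullMeasurableSet, Filter.Eventually.of_forall hcov, hVdisj⟩
  -- volume of V
  set onb := EuclideanSpace.basisFun (Fin n) ℝ with honb
  set b₀ : Module.Basis (Fin n) ℝ (EuclideanSpace ℝ (Fin n)) := onb.toBasis with hb₀
  have hvolV : volume V = ENNReal.ofReal |b₀.det ⇑B| := by
    rw [hVfd.measure_eq (ZSpan.isAddFundamentalDomain B volume),
      ZSpan.measure_fundamentalDomain B volume b₀,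
      measure_congr (ZSpan.fundamentalDomain_ae_parallelepiped b₀ volume)]
    rw [show ⇑b₀ = ⇑onb from onb.coe_toBasis, onb.volume_parallelepiped, mul_one]
  have hdetv : Real.sqrt (Matrix.det (Matrix.of fun i j : Fin n =>
      (inner ℝ (B i) (B j) : ℝ))) = |b₀.det ⇑B| := by
    set M := b₀.toMatrix ⇑B with hM
    have hMe : ∀ i j, M i j = B j i := by
      intro i j
      simp [hM, Module.Basis.toMatrix_apply, hb₀, honb, EuclideanSpace.basisFun_repr]
    have hG : (Matrix.of fun i j : Fin n => (inner ℝ (B i) (B j) : ℝ)) = M.transpose * M := by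
      ext i j
      simp only [Matrix.mul_apply, Matrix.transpose_apply, hMe, Matrix.of_apply]
      rw [PiLp.inner_apply]
      simp [RCLike.inner_apply, mul_comm]
    rw [hG, Matrix.det_mul, Matrix.det_transpose, ← sq, Real.sqrt_sq_eq_abs, Module.Basis.det_apply]
  have hvolK : volume K = volume V := by rw [hKvol, hdetv, hvolV]
  have hVfin : volume V ≠ ⊤ := by rw [hvolV]; exact ENNReal.ofReal_ne_top
  have hKfin : volume K ≠ ⊤ := by rw [hvolK]; exact hVfin
  -- a.e. disjointness of K translates
  have hKmeas : MeasurableSet K := hK2.isClosed.measurableSet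
  have hKfr : volume (K \ interior K) = 0 := by
    refine measure_mono_null ?_ (hK1.addHaar_frontier volume)
    intro x hx
    exact ⟨subset_closure hx.1, hx.2⟩
  have hcoeS : ∀ (g : L) (S : Set (EuclideanSpace ℝ (Fin n))),
      g +ᵥ S = (g : EuclideanSpace ℝ (Fin n)) +ᵥ S := fun _ _ => rfl
  have hKdisj : Pairwise (Function.onFun (AEDisjoint volume) fun g : L => g +ᵥ K) := by
    intro g g' hgg'
    set y := (g : EuclideanSpace ℝ (Fin n)) with hy
    set y' := (g' : EuclideanSpace ℝ (Fin n)) with hy'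
    have hz : y' - y ∈ L := sub_mem g'.2 g.2
    have hzne : y' - y ≠ 0 := sub_ne_zero.mpr fun h => hgg' (Subtype.coe_injective h).symm
    have htrans : (y +ᵥ K) ∩ (y' +ᵥ K) = y +ᵥ (K ∩ ((y' - y) +ᵥ K)) := by
      ext x
      simp only [Set.mem_inter_iff, Set.mem_vadd_set_iff_neg_vadd_mem, vadd_eq_add]
      constructor
      · rintro ⟨h1, h2⟩
        exact ⟨h1, by rwa [show -(y' - y) + (-y + x) = -y' + x by abel]⟩
      · rintro ⟨h1, h2⟩
        exact ⟨h1, by rwa [show -(y' - y) + (-y + x) = -y' + x by abel] at h2⟩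
    have hmain : volume ((y +ᵥ K) ∩ (y' +ᵥ K)) = 0 := by
      rw [htrans, measure_vadd]
      refine measure_mono_null ?_ hKfr
      rintro x ⟨hx1, hx2⟩
      refine ⟨hx1, fun hint => ?_⟩
      have h5 := hK4 (y' - y) hz hzne
      rw [Set.eq_empty_iff_forall_notMem] at h5
      refine h5 x ⟨hint, ?_⟩
      rw [Set.mem_vadd_set_iff_neg_vadd_mem, vadd_eq_add] at hx2
      refine ⟨-(y' - y) + x, hx2, ?_⟩
      show -(y' - y) + x + (y' - y) = x
      rw [neg_add_eq_sub, sub_add_cancel]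
    simpa only [Function.onFun, hcoeS, AEDisjoint] using hmain
  -- main chain
  obtain ⟨RK, hRK⟩ : ∃ R : ℝ, K ⊆ Metric.closedBall 0 R := hK2.isBounded.subset_closedBall 0
  set R := max RV RK with hR
  set U : Set (EuclideanSpace ℝ (Fin n)) := ⋃ γ : L, ((γ +ᵥ K) ∩ V) with hU
  have hpmeas : ∀ γ : L, MeasurableSet ((γ +ᵥ K) ∩ V) := by
    intro γ
    rw [hcoeS]
    exact (hKmeas.const_vadd _).inter hVmeas
  have hpdisj : Pairwise (Function.onFun (AEDisjoint volume) fun γ : L => (γ +ᵥ K) ∩ V) :=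
    fun γ γ' h => (hKdisj h).mono Set.inter_subset_left Set.inter_subset_left
  have hUmeq : volume U = volume K := by
    rw [hU, measure_iUnion₀ hpdisj (fun γ => (hpmeas γ).nullMeasurableSet),
      ← hVfd.measure_eq_tsum K]
  have hUsub : U ⊆ V := Set.iUnion_subset fun γ => Set.inter_subset_right
  have hVUnull : volume (V \ U) = 0 := by
    have hUfin : volume U ≠ ⊤ := by rw [hUmeq]; exact hKfin
    rw [measure_diff hUsub (MeasurableSet.iUnion hpmeas).nullMeasurableSet hUfin, hUmeq,
      hvolK, tsub_self]
  have hVaeU : V =ᵐ[volume] U := by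
    refine MeasureTheory.ae_eq_set.mpr ⟨hVUnull, ?_⟩
    rw [Set.diff_eq_empty.mpr hUsub]
    exact measure_empty
  set gE : EuclideanSpace ℝ (Fin n) → ENNReal := fun x => ENNReal.ofReal (f ‖x‖ - f 0) with hgE
  have hgmeas : Measurable gE :=
    ENNReal.measurable_ofReal.comp ((hfm.comp measurable_norm).sub measurable_const)
  have step1 : ∫⁻ x in V, gE x = ∑' γ : L, ∫⁻ x in (γ +ᵥ K) ∩ V, gE x := by
    rw [setLIntegral_congr hVaeU, hU,
      lintegral_iUnion₀ (fun γ => (hpmeas γ).nullMeasurableSet) hpdisj]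
  have step2 : ∀ γ : L, ∫⁻ x in (γ +ᵥ K) ∩ V, gE x ≤ ∫⁻ x in (γ +ᵥ K) ∩ V, gE (-γ +ᵥ x) := by
    intro γ
    refine setLIntegral_mono (hgmeas.comp (measurable_const_vadd _)) fun x hx => ?_
    have h6 : ‖x‖ ≤ ‖x - (γ : EuclideanSpace ℝ (Fin n))‖ := hVnorm x hx.2 _ γ.2
    have h7 : (-γ +ᵥ x : EuclideanSpace ℝ (Fin n)) = x - (γ : EuclideanSpace ℝ (Fin n)) := by
      show -(γ : EuclideanSpace ℝ (Fin n)) + x = _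
      rw [neg_add_eq_sub]
    show ENNReal.ofReal (f ‖x‖ - f 0) ≤ ENNReal.ofReal (f ‖(-γ +ᵥ x : EuclideanSpace ℝ (Fin n))‖ - f 0)
    rw [h7]
    exact ENNReal.ofReal_le_ofReal (sub_le_sub_right (hf h6) _)
  have step3 : ∑' γ : L, ∫⁻ x in (γ +ᵥ K) ∩ V, gE (-γ +ᵥ x) = ∫⁻ x in K, gE x :=
    (hVfd.setLIntegral_eq_tsum' gE K).symm
  have ha : ∫⁻ x in V, gE x ≤ ∫⁻ x in K, gE x := by
    rw [step1, ← step3]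
    exact ENNReal.tsum_le_tsum step2
  have hbK : ∫⁻ x in K, gE x ≠ ⊤ := by
    have hle : ∫⁻ x in K, gE x ≤ ∫⁻ _ in K, ENNReal.ofReal (f R - f 0) :=
      setLIntegral_mono measurable_const fun x hx => ENNReal.ofReal_le_ofReal
        (sub_le_sub_right (hf ((mem_closedBall_zero_iff.mp (hRK hx)).trans (le_max_right _ _))) _)
    refine ne_top_of_le_ne_top ?_ hle
    rw [setLIntegral_const]
    exact ENNReal.mul_ne_top ENNReal.ofReal_ne_top hKfin
  have key : ∀ A : Set (EuclideanSpace ℝ (Fin n)), MeasurableSet A →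
      A ⊆ Metric.closedBall 0 R → volume A ≠ ⊤ →
      ∫ x in A, f ‖x‖ = (∫⁻ x in A, gE x).toReal + f 0 * (volume A).toReal := by
    intro A hA hAB hAfin
    have hmeas1 : AEStronglyMeasurable (fun x : EuclideanSpace ℝ (Fin n) => f ‖x‖ - f 0) volume :=
      ((hfm.comp measurable_norm).sub measurable_const).aestronglyMeasurable
    have hint1 : IntegrableOn (fun x => f ‖x‖ - f 0) A volume := by
      refine Measure.integrableOn_of_bounded hAfin hmeas1 (M := f R - f 0) ?_
      filter_upwards [ae_restrict_mem hA] with x hx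
      rw [Real.norm_eq_abs, abs_of_nonneg (sub_nonneg.2 (hf (norm_nonneg x)))]
      exact sub_le_sub_right (hf (mem_closedBall_zero_iff.mp (hAB hx))) _
    have heq : ∫ x in A, f ‖x‖ = ∫ x in A, ((f ‖x‖ - f 0) + f 0) := by
      congr 1
      ext x
      ring
    rw [heq, integral_add hint1 ((integrableOn_const_iff (C := f 0)).mpr (Or.inr (lt_top_iff_ne_top.mpr hAfin))),
      integral_eq_lintegral_of_nonneg_ae
        (Filter.Eventually.of_forall fun x => sub_nonneg.2 (hf (norm_nonneg x)))
        hmeas1.restrict,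
      setIntegral_const]
    rw [smul_eq_mul, mul_comm]
    rfl
  have hVkey := key V hVmeas
    (hRV.trans (Metric.closedBall_subset_closedBall (le_max_left _ _))) hVfin
  have hKkey := key K hKmeas
    (hRK.trans (Metric.closedBall_subset_closedBall (le_max_right _ _))) hKfin
  rw [hVkey, hKkey]
  have hmono := ENNReal.toReal_mono hbK ha
  have h0 : f 0 * (volume V).toReal = f 0 * (volume K).toReal := by rw [hvolK]
  linarith
end
end

section
/- The Voronoi cell of any full-rank lattice L in R^n has normally symmetric facets: for any nonzero lattice vector y, if x satisfies <y',x>/||y'||^2 <= <y,x>/||y||^2 for all nonzero lattice vectors y' (i.e., x lies in the cone of the facet normal to y), then the reflection phi_y(x) = 2<y,x>y/||y||^2 - x also satisfies this condition. -/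
open scoped Real Pointwise
open MeasureTheory Set

noncomputable section

variable {E : Type*} [NormedAddCommGroup E] [InnerProductSpace ℝ E]

/-- The Voronoi cell of a lattice has normally symmetric facets. -/
theorem voronoi_normally_symmetric_facets {n : ℕ}
    (L : Submodule ℤ (EuclideanSpace ℝ (Fin n))) (hL : IsLatticeOfRank L n)
    (y : EuclideanSpace ℝ (Fin n)) (hy : y ∈ L) (hy0 : y ≠ 0)
    (x : EuclideanSpace ℝ (Fin n))
    (hx : ∀ y' ∈ L, y' ≠ 0 →
      (inner ℝ y' x : ℝ) / ‖y'‖ ^ 2 ≤ (inner ℝ y x : ℝ) / ‖y‖ ^ 2) :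
    ∀ y' ∈ L, y' ≠ 0 →
      (inner ℝ y' ((2 * (inner ℝ y x : ℝ) / ‖y‖ ^ 2) • y - x) : ℝ) / ‖y'‖ ^ 2 ≤
        (inner ℝ y ((2 * (inner ℝ y x : ℝ) / ‖y‖ ^ 2) • y - x) : ℝ) / ‖y‖ ^ 2 := by
  intro y' hy' hy'0
  have hA : (0:ℝ) < ‖y‖ ^ 2 := pow_pos (norm_pos_iff.mpr hy0) 2
  have hB : (0:ℝ) < ‖y'‖ ^ 2 := pow_pos (norm_pos_iff.mpr hy'0) 2
  have hAne : (‖y‖ ^ 2 : ℝ) ≠ 0 := ne_of_gt hA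
  simp only [inner_sub_right, real_inner_smul_right, real_inner_self_eq_norm_sq]
  rcases eq_or_ne y' y with rfl | hne
  · rw [real_inner_self_eq_norm_sq]
  · have hsub0 : y - y' ≠ 0 := sub_ne_zero_of_ne hne.symm
    have hC : (0:ℝ) < ‖y - y'‖ ^ 2 := pow_pos (norm_pos_iff.mpr hsub0) 2
    have h := hx (y - y') (Submodule.sub_mem L hy hy') hsub0
    rw [div_le_div_iff₀ hC hA] at h
    have hexp : ‖y - y'‖ ^ 2 = ‖y‖ ^ 2 - 2 * inner ℝ y y' + ‖y'‖ ^ 2 :=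
      norm_sub_sq_real y y'
    have hsubl : (inner ℝ (y - y') x : ℝ) = inner ℝ y x - inner ℝ y' x := inner_sub_left y y' x
    have hsym : (inner ℝ y' y : ℝ) = inner ℝ y y' := real_inner_comm y y'
    rw [div_le_div_iff₀ hB hA, hsym]
    rw [hexp, hsubl] at h
    set a : ℝ := inner ℝ y x with ha
    set q : ℝ := inner ℝ y' x with hq
    set r : ℝ := inner ℝ y y' with hr
    set A : ℝ := ‖y‖ ^ 2 with hAdef
    set B : ℝ := ‖y'‖ ^ 2 with hBdef
    have h1 : (2 * a / A * r - q) * A = 2 * a * r - q * A := by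
      field_simp
    have h2 : 2 * a / A * A = 2 * a := div_mul_cancel₀ _ hAne
    rw [h1, h2]
    nlinarith [h]
end
end
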